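/- arXiv:1411.4678 — 5 statements merged into one kernel-verified Lean document; each statement's English description precedes it below -/
import Mathlib

section
/- Let H be a real Hilbert space and B : H × H → ℝ a continuous symmetric positive semidefinite bilinear form whose quadratic form q(u) = B(u,u) is sequentially weakly continuous, and suppose the set S = {u ∈ H : q(u) = 1} is nonempty. Then δ := inf{‖u‖² : u ∈ S} is attained at some Û ∈ S, δ > 0, and consequently √(q(u)) ≤ δ^{−1/2} ‖u‖ for every u ∈ H. -/
open Filter Topology
open scoped RealInnerProductSpace


lemma weak_subseq {H : Type*} [NormedAddCommGroup H] [InnerProductSpace ℝ H]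
    [CompleteSpace H] (u : ℕ → H) (R : ℝ) (hb : ∀ n, ‖u n‖ ≤ R) :
    ∃ (x : H) (φ : ℕ → ℕ), StrictMono φ ∧
      ∀ w : H, Tendsto (fun n => ⟪u (φ n), w⟫) atTop (𝓝 ⟪x, w⟫) := by
  have hR : 0 ≤ R := le_trans (norm_nonneg _) (hb 0)
  set K : Submodule ℝ H := (Submodule.span ℝ (Set.range u)).topologicalClosure with hK
  have huK : ∀ n, u n ∈ K := fun n =>
    Submodule.le_topologicalClosure _ (Submodule.subset_span (Set.mem_range_self n))
  have hsep : TopologicalSpace.IsSeparable (K : Set H) :=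
    ((Set.countable_range u).isSeparable.span).closure
  obtain ⟨c, hc_count, hc_sub⟩ := hsep
  have hc_ne : (insert 0 c).Nonempty := ⟨0, Set.mem_insert _ _⟩
  obtain ⟨d, hd⟩ := (hc_count.insert 0).exists_eq_range hc_ne
  have hcd : (K : Set H) ⊆ closure (Set.range d) := by
    rw [← hd]
    exact hc_sub.trans (closure_mono (Set.subset_insert _ _))
  -- diagonal subsequence via compactness of product of intervals
  set s : Set (ℕ → ℝ) := Set.univ.pi (fun i => Set.Icc (-(R * ‖d i‖)) (R * ‖d i‖)) with hs
  have hcomp : IsCompact s := isCompact_univ_pi (fun i => isCompact_Icc)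
  have hmem : ∀ n, (fun i => ⟪u n, d i⟫) ∈ s := by
    intro n
    rw [hs, Set.mem_univ_pi]
    intro i
    have := abs_real_inner_le_norm (u n) (d i)
    have h2 : ‖u n‖ * ‖d i‖ ≤ R * ‖d i‖ :=
      mul_le_mul_of_nonneg_right (hb n) (norm_nonneg _)
    constructor <;> [linarith [neg_abs_le (⟪u n, d i⟫ : ℝ)]; linarith [le_abs_self (⟪u n, d i⟫ : ℝ)]]
  obtain ⟨L, -, φ, hφ, hLt⟩ := hcomp.tendsto_subseq hmem
  have hcoord : ∀ i, Tendsto (fun n => ⟪u (φ n), d i⟫) atTop (𝓝 (L i)) := by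
    intro i
    have := tendsto_pi_nhds.1 hLt i
    simpa using this
  -- Cauchy for every w
  haveI : CompleteSpace K := (Submodule.isClosed_topologicalClosure _).completeSpace_coe
  have hcauchy : ∀ w : H, CauchySeq (fun n => (⟪u (φ n), w⟫ : ℝ)) := by
    intro w
    set wp : H := (K.orthogonalProjectionOnto w : H) with hwp
    have hrw : ∀ n, (⟪u (φ n), w⟫ : ℝ) = ⟪u (φ n), wp⟫ := by
      intro n
      have hmemo : w - wp ∈ Kᗮ := K.sub_starProjection_mem_orthogonal w
      have : ⟪u (φ n), w - wp⟫ = (0 : ℝ) := hmemo (u (φ n)) (huK (φ n))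
      rw [inner_sub_right] at this
      linarith
    simp only [hrw]
    rw [Metric.cauchySeq_iff']
    intro ε hε
    have hwpK : wp ∈ closure (Set.range d) := hcd (K.orthogonalProjectionOnto w).2
    obtain ⟨i, hi⟩ := Metric.mem_closure_range_iff.1 hwpK (ε / (3 * (R + 1)))
      (div_pos hε (by linarith))
    have hcc : CauchySeq (fun n => (⟪u (φ n), d i⟫ : ℝ)) := (hcoord i).cauchySeq
    obtain ⟨N, hN⟩ := Metric.cauchySeq_iff'.1 hcc (ε / 3) (by linarith)
    refine ⟨N, fun n hn => ?_⟩
    have key : ∀ m, |(⟪u (φ m), wp⟫ : ℝ) - ⟪u (φ m), d i⟫| ≤ R * (ε / (3 * (R + 1))) := by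
      intro m
      have : (⟪u (φ m), wp⟫ : ℝ) - ⟪u (φ m), d i⟫ = ⟪u (φ m), wp - d i⟫ := by
        rw [inner_sub_right]
      rw [this]
      calc |(⟪u (φ m), wp - d i⟫ : ℝ)| ≤ ‖u (φ m)‖ * ‖wp - d i‖ := abs_real_inner_le_norm _ _
        _ ≤ R * (ε / (3 * (R + 1))) := by
            apply mul_le_mul (hb _) ?_ (norm_nonneg _) hR
            rw [← dist_eq_norm]
            exact hi.le
    have hRe : R * (ε / (3 * (R + 1))) < ε / 3 := by
      have h2 : R * (ε / (3 * (R + 1))) < (R + 1) * (ε / (3 * (R + 1))) :=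
        mul_lt_mul_of_pos_right (by linarith) (div_pos hε (by linarith))
      have h3 : (R + 1) * (ε / (3 * (R + 1))) = ε / 3 := by
        field_simp
      linarith
    have h1 := key n
    have h2 := key N
    have h3 := hN n hn
    rw [Real.dist_eq] at h3 ⊢
    have : |(⟪u (φ n), wp⟫ : ℝ) - ⟪u (φ N), wp⟫| ≤
        |(⟪u (φ n), wp⟫ : ℝ) - ⟪u (φ n), d i⟫| + (|(⟪u (φ n), d i⟫ : ℝ) - ⟪u (φ N), d i⟫|
          + |(⟪u (φ N), d i⟫ : ℝ) - ⟪u (φ N), wp⟫|) :=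
      (abs_sub_le _ (⟪u (φ n), d i⟫ : ℝ) _).trans
        (add_le_add_right (abs_sub_le _ (⟪u (φ N), d i⟫ : ℝ) _) _)
    have h2' : |(⟪u (φ N), d i⟫ : ℝ) - ⟪u (φ N), wp⟫| ≤ R * (ε / (3 * (R + 1))) := by
      rwa [abs_sub_comm]
    linarith
  choose ℓ hℓ using fun w => cauchySeq_tendsto_of_complete (hcauchy w)
  -- ℓ is linear and bounded
  have hadd : ∀ w w', ℓ (w + w') = ℓ w + ℓ w' := by
    intro w w'
    refine tendsto_nhds_unique ?_ ((hℓ w).add (hℓ w'))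
    simpa [inner_add_right] using hℓ (w + w')
  have hsmul : ∀ (a : ℝ) w, ℓ (a • w) = a * ℓ w := by
    intro a w
    refine tendsto_nhds_unique ?_ ((hℓ w).const_mul a)
    simpa [inner_smul_right] using hℓ (a • w)
  have hbound : ∀ w, |ℓ w| ≤ R * ‖w‖ := by
    intro w
    have : Tendsto (fun n => |(⟪u (φ n), w⟫ : ℝ)|) atTop (𝓝 |ℓ w|) := (hℓ w).abs
    refine le_of_tendsto this (Eventually.of_forall fun n => ?_)
    exact (abs_real_inner_le_norm _ _).trans
      (mul_le_mul_of_nonneg_right (hb _) (norm_nonneg _))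
  let f : H →ₗ[ℝ] ℝ :=
    { toFun := ℓ, map_add' := hadd, map_smul' := hsmul }
  let F : H →L[ℝ] ℝ := f.mkContinuous R (fun w => by
    simpa [f, Real.norm_eq_abs] using hbound w)
  refine ⟨(InnerProductSpace.toDual ℝ H).symm F, φ, hφ, fun w => ?_⟩
  have : ⟪(InnerProductSpace.toDual ℝ H).symm F, w⟫ = F w :=
    InnerProductSpace.toDual_symm_apply
  rw [this]
  exact hℓ w

/-- Let `H` be a real Hilbert space and `B` a continuous
symmetric positive semidefinite bilinear form whose quadratic form
`q(u) = B(u,u)` is sequentially weakly continuous, and suppose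
`S = {u : B(u,u) = 1}` is nonempty. Then `δ = inf {‖u‖² : u ∈ S}` is attained
at some `Uhat ∈ S`, `δ > 0`, and `√(q(u)) ≤ δ^{−1/2} ‖u‖` for every `u`. -/
theorem stmt5 {H : Type*} [NormedAddCommGroup H] [InnerProductSpace ℝ H]
    [CompleteSpace H] (B : H →L[ℝ] H →L[ℝ] ℝ)
    (hsymm : ∀ u v : H, B u v = B v u)
    (hpos : ∀ u : H, 0 ≤ B u u)
    (hweak : ∀ (u : ℕ → H) (x : H),
      (∀ w : H, Tendsto (fun n => ⟪u n, w⟫) atTop (nhds ⟪x, w⟫)) →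
      Tendsto (fun n => B (u n) (u n)) atTop (nhds (B x x)))
    (hS : ∃ u : H, B u u = 1) :
    (∃ Uhat : H, B Uhat Uhat = 1 ∧
        ‖Uhat‖ ^ 2 = sInf ((fun u : H => ‖u‖ ^ 2) '' {u : H | B u u = 1})) ∧
    0 < sInf ((fun u : H => ‖u‖ ^ 2) '' {u : H | B u u = 1}) ∧
    (∀ u : H, Real.sqrt (B u u) ≤
      Real.sqrt (sInf ((fun u : H => ‖u‖ ^ 2) '' {u : H | B u u = 1}))⁻¹ * ‖u‖) := by
  obtain ⟨u₀, hu₀⟩ := hS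
  set T : Set ℝ := (fun u : H => ‖u‖ ^ 2) '' {u : H | B u u = 1} with hT
  set δ : ℝ := sInf T with hδ
  have hTne : T.Nonempty := ⟨‖u₀‖ ^ 2, u₀, hu₀, rfl⟩
  have hTbdd : BddBelow T := ⟨0, by rintro t ⟨v, hv, rfl⟩; positivity⟩
  -- bound |B v v| ≤ ‖B‖ ‖v‖²
  have hBub : ∀ v : H, |B v v| ≤ ‖B‖ * ‖v‖ * ‖v‖ := by
    intro v
    calc |B v v| = ‖B v v‖ := (Real.norm_eq_abs _).symm
      _ ≤ ‖B v‖ * ‖v‖ := (B v).le_opNorm v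
      _ ≤ ‖B‖ * ‖v‖ * ‖v‖ :=
          mul_le_mul_of_nonneg_right (B.le_opNorm v) (norm_nonneg v)
  have hBpos : 0 < ‖B‖ := by
    rcases (norm_nonneg B).lt_or_eq with h | h
    · exact h
    · exfalso
      have := hBub u₀
      rw [hu₀, ← h] at this
      simp at this
      linarith
  -- δ > 0
  have hδpos : 0 < δ := by
    have : ‖B‖⁻¹ ≤ δ := by
      apply le_csInf hTne
      rintro t ⟨v, hv, rfl⟩
      have h1 := hBub v
      rw [Set.mem_setOf_eq] at hv
      rw [hv, abs_one] at h1
      rw [← one_div, div_le_iff₀ hBpos]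
      show (1 : ℝ) ≤ ‖v‖ ^ 2 * ‖B‖
      nlinarith [norm_nonneg v]
    exact lt_of_lt_of_le (inv_pos.2 hBpos) this
  have hδmem : ∀ v : H, B v v = 1 → δ ≤ ‖v‖ ^ 2 := fun v hv =>
    csInf_le hTbdd ⟨v, hv, rfl⟩
  -- minimizing sequence
  have hmin : ∀ n : ℕ, ∃ v : H, B v v = 1 ∧ ‖v‖ ^ 2 < δ + 1 / (n + 1) := by
    intro n
    obtain ⟨t, ⟨v, hv, rfl⟩, hlt⟩ :=
      Real.lt_sInf_add_pos hTne (by positivity : (0 : ℝ) < 1 / (n + 1))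
    exact ⟨v, hv, hlt⟩
  choose seq hseq1 hseq2 using hmin
  have hbound : ∀ n, ‖seq n‖ ≤ Real.sqrt (δ + 1) := by
    intro n
    rw [Real.le_sqrt (norm_nonneg _) (by positivity)]
    have h1 : (1 : ℝ) / (n + 1) ≤ 1 := by
      rw [div_le_one (by positivity)]
      linarith [Nat.cast_nonneg (α := ℝ) n]
    linarith [hseq2 n]
  obtain ⟨x, φ, hφ, hx⟩ := weak_subseq seq (Real.sqrt (δ + 1)) hbound
  -- x ∈ S
  have hxS : B x x = 1 := by
    have h1 : Tendsto (fun n => B (seq (φ n)) (seq (φ n))) atTop (𝓝 (B x x)) :=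
      hweak (seq ∘ φ) x (fun w => hx w)
    have h2 : Tendsto (fun n => B (seq (φ n)) (seq (φ n))) atTop (𝓝 1) := by
      simp only [hseq1]
      exact tendsto_const_nhds
    exact tendsto_nhds_unique h1 h2
  -- ‖x‖² ≤ δ
  have hxle : ‖x‖ ^ 2 ≤ δ := by
    have h1 : Tendsto (fun n => (⟪seq (φ n), x⟫ : ℝ)) atTop (𝓝 (⟪x, x⟫ : ℝ)) := hx x
    have h2 : Tendsto (fun n : ℕ => Real.sqrt (δ + 1 / (n + 1)) * ‖x‖) atTop
        (𝓝 (Real.sqrt δ * ‖x‖)) := by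
      have h3 : Tendsto (fun n : ℕ => δ + 1 / ((n : ℝ) + 1)) atTop (𝓝 δ) := by
        have := tendsto_one_div_add_atTop_nhds_zero_nat (𝕜 := ℝ)
        simpa using (tendsto_const_nhds (x := δ)).add this
      exact ((Real.continuous_sqrt.tendsto δ).comp h3).mul_const ‖x‖
    have hle : ∀ n, (⟪seq (φ n), x⟫ : ℝ) ≤ Real.sqrt (δ + 1 / (n + 1)) * ‖x‖ := by
      intro n
      have h4 : ‖seq (φ n)‖ ≤ Real.sqrt (δ + 1 / (n + 1)) := by
        rw [Real.le_sqrt (norm_nonneg _) (by positivity)]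
        have hnn : (n : ℝ) ≤ φ n := by exact_mod_cast hφ.le_apply
        have h5 : (1 : ℝ) / (φ n + 1) ≤ 1 / (n + 1) :=
          one_div_le_one_div_of_le (by positivity) (by linarith)
        linarith [hseq2 (φ n)]
      exact (real_inner_le_norm _ _).trans
        (mul_le_mul_of_nonneg_right h4 (norm_nonneg _))
    have h6 : (⟪x, x⟫ : ℝ) ≤ Real.sqrt δ * ‖x‖ :=
      le_of_tendsto_of_tendsto' h1 h2 hle
    rw [real_inner_self_eq_norm_sq] at h6
    rcases eq_or_lt_of_le (norm_nonneg x) with h | h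
    · rw [← h]; simpa using hδpos.le
    · have h7 : ‖x‖ ≤ Real.sqrt δ := by
        have := mul_le_mul_of_nonneg_right h6 (le_of_lt (inv_pos.2 h))
        nlinarith [Real.sqrt_nonneg δ]
      calc ‖x‖ ^ 2 ≤ Real.sqrt δ ^ 2 := by nlinarith [norm_nonneg x]
        _ = δ := Real.sq_sqrt hδpos.le
  have hxeq : ‖x‖ ^ 2 = δ := le_antisymm hxle (hδmem x hxS)
  refine ⟨⟨x, hxS, hxeq⟩, hδpos, fun u => ?_⟩
  by_cases hq : B u u = 0
  · rw [hq, Real.sqrt_zero]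
    positivity
  · have hqpos : 0 < B u u := (hpos u).lt_of_ne (Ne.symm hq)
    set q : ℝ := B u u with hqdef
    have hsq : 0 < Real.sqrt q := Real.sqrt_pos.2 hqpos
    set c : ℝ := (Real.sqrt q)⁻¹ with hc
    have hcpos : 0 < c := inv_pos.2 hsq
    have hv1 : B (c • u) (c • u) = 1 := by
      have : B (c • u) (c • u) = c * (c * B u u) := by
        rw [map_smul]
        simp [smul_eq_mul]
      rw [this, ← hqdef, hc]
      rw [← Real.mul_self_sqrt hqpos.le]
      field_simp
      rw [Real.sqrt_sq hsq.le]
    have hδle : δ ≤ ‖c • u‖ ^ 2 := hδmem _ hv1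
    have hnv : ‖c • u‖ ^ 2 = ‖u‖ ^ 2 / q := by
      rw [norm_smul, mul_pow, Real.norm_eq_abs, abs_of_pos hcpos, hc,
        ← Real.sqrt_inv, Real.sq_sqrt (by positivity)]
      rw [div_eq_inv_mul, inv_mul_eq_div, div_eq_inv_mul]
    have hδq : δ * q ≤ ‖u‖ ^ 2 := by
      rw [hnv, le_div_iff₀ hqpos] at hδle
      linarith
    have h8 : Real.sqrt (δ * q) ≤ ‖u‖ := by
      rw [← Real.sqrt_sq (norm_nonneg u)]
      exact Real.sqrt_le_sqrt hδq
    rw [Real.sqrt_mul hδpos.le] at h8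
    have hsδ : 0 < Real.sqrt δ := Real.sqrt_pos.2 hδpos
    calc Real.sqrt q = (Real.sqrt δ)⁻¹ * (Real.sqrt δ * Real.sqrt q) := by
          field_simp
      _ ≤ (Real.sqrt δ)⁻¹ * ‖u‖ :=
          mul_le_mul_of_nonneg_left h8 (inv_pos.2 hsδ).le
      _ = Real.sqrt δ⁻¹ * ‖u‖ := by rw [Real.sqrt_inv]
end

section
/- Let H be a nonzero real Hilbert space and B : H × H → ℝ a continuous symmetric bilinear form with B(u,u) > 0 for every u ≠ 0, whose quadratic form q(u) = B(u,u) is sequentially weakly continuous. Then μ₁ := inf{‖u‖² : u ∈ H, B(u,u) = 1} is attained at some φ₁ with B(φ₁, φ₁) = 1; furthermore μ₁ > 0, μ₁ = inf{‖u‖²/B(u,u) : u ∈ H, u ≠ 0} (Rayleigh quotient characterization), and φ₁ satisfies the eigenvalue equation ⟨φ₁, v⟩ = μ₁ B(φ₁, v) for all v ∈ H. -/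
open Filter Topology
open scoped RealInnerProductSpace

lemma weak_compact_aux {H : Type*} [NormedAddCommGroup H] [InnerProductSpace ℝ H]
    [CompleteSpace H] (u : ℕ → H) (C : ℝ) (hb : ∀ n, ‖u n‖ ≤ C) :
    ∃ (x : H) (φ : ℕ → ℕ), StrictMono φ ∧
      ∀ w : H, Tendsto (fun k => ⟪u (φ k), w⟫) atTop (𝓝 ⟪x, w⟫) := by
  have hC0 : 0 ≤ C := (norm_nonneg _).trans (hb 0)
  -- Step 1: diagonal extraction via compactness of a product of intervals
  set v : ℕ → (ℕ → ℝ) := fun n m => ⟪u n, u m⟫ with hv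
  have hs : IsCompact (Set.pi Set.univ fun _ : ℕ => Set.Icc (-(C*C)) (C*C)) :=
    isCompact_univ_pi fun _ => isCompact_Icc
  have hmem : ∀ n, v n ∈ Set.pi Set.univ fun _ : ℕ => Set.Icc (-(C*C)) (C*C) := by
    intro n m _
    have h1 : |⟪u n, u m⟫| ≤ ‖u n‖ * ‖u m‖ := abs_real_inner_le_norm _ _
    have h2 : ‖u n‖ * ‖u m‖ ≤ C * C :=
      mul_le_mul (hb n) (hb m) (norm_nonneg _) hC0
    exact abs_le.mp (h1.trans h2)
  obtain ⟨g, -, φ, hφ, hg⟩ := hs.tendsto_subseq hmem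
  have hgm : ∀ m, Tendsto (fun k => ⟪u (φ k), u m⟫) atTop (𝓝 (g m)) := by
    intro m
    exact tendsto_pi_nhds.mp hg m
  -- Step 2: convergence on the span of the range
  have hspan : ∀ w ∈ Submodule.span ℝ (Set.range u),
      ∃ L, Tendsto (fun k => ⟪u (φ k), w⟫) atTop (𝓝 L) := by
    intro w hw
    induction hw using Submodule.span_induction with
    | mem w hw =>
      obtain ⟨m, rfl⟩ := hw
      exact ⟨g m, hgm m⟩
    | zero => exact ⟨0, by simp⟩
    | add a b _ _ ha hb' =>
      obtain ⟨La, ha⟩ := ha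
      obtain ⟨Lb, hb'⟩ := hb'
      exact ⟨La + Lb, by simpa [inner_add_right] using ha.add hb'⟩
    | smul c a _ h =>
      obtain ⟨L, h⟩ := h
      exact ⟨c * L, by simpa [inner_smul_right] using h.const_mul c⟩
  -- Step 3: Cauchy for every w
  set K := (Submodule.span ℝ (Set.range u)).topologicalClosure with hK
  have huK : ∀ n, u n ∈ K :=
    fun n => Submodule.le_topologicalClosure _ (Submodule.subset_span ⟨n, rfl⟩)
  have key : ∀ w : H, CauchySeq (fun k => ⟪u (φ k), w⟫) := by
    intro w
    have : CompleteSpace K :=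
      (Submodule.span ℝ (Set.range u)).isClosed_topologicalClosure.completeSpace_coe
    set p : H := (K.orthogonalProjectionOnto w : H) with hp
    have hup : ∀ n, ⟪u n, w⟫ = ⟪u n, p⟫ := by
      intro n
      have hmem : w - p ∈ Kᗮ := Submodule.sub_starProjection_mem_orthogonal (K := K) w
      have h0 : ⟪u n, w - p⟫ = 0 := hmem (u n) (huK n)
      have := inner_sub_right (𝕜 := ℝ) (u n) w p
      linarith [h0, this]
    have heq : (fun k => ⟪u (φ k), w⟫) = fun k => ⟪u (φ k), p⟫ := funext fun k => hup _
    rw [heq]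
    refine Metric.cauchySeq_iff.mpr fun ε hε => ?_
    have hpK : p ∈ closure ((Submodule.span ℝ (Set.range u) : Submodule ℝ H) : Set H) := by
      rw [← Submodule.topologicalClosure_coe]
      exact (K.orthogonalProjectionOnto w).2
    obtain ⟨y, hy, hyp⟩ := Metric.mem_closure_iff.mp hpK (ε / (4 * (C + 1)))
      (by positivity)
    obtain ⟨L, hL⟩ := hspan y hy
    have hcauchy : CauchySeq (fun k => ⟪u (φ k), y⟫) := hL.cauchySeq
    obtain ⟨N, hN⟩ := Metric.cauchySeq_iff.mp hcauchy (ε / 2) (by positivity)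
    refine ⟨N, fun m hm n hn => ?_⟩
    have hbnd : ∀ k, |⟪u (φ k), p - y⟫| ≤ C * (ε / (4 * (C + 1))) := by
      intro k
      calc |⟪u (φ k), p - y⟫| ≤ ‖u (φ k)‖ * ‖p - y‖ := abs_real_inner_le_norm _ _
        _ ≤ C * (ε / (4 * (C + 1))) := by
            apply mul_le_mul (hb _) _ (norm_nonneg _) hC0
            rw [← dist_eq_norm]
            exact le_of_lt hyp
    have hCe : C * (ε / (4 * (C + 1))) ≤ ε / 4 := by
      have h4 : (0:ℝ) < 4 * (C + 1) := by positivity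
      calc C * (ε / (4 * (C + 1))) = C * ε / (4 * (C + 1)) := by ring
        _ ≤ ε / 4 := by
            rw [div_le_div_iff₀ h4 (by norm_num : (0:ℝ) < 4)] at *
            nlinarith
    have h1 := hN m hm n hn
    rw [Real.dist_eq] at h1 ⊢
    have e1 : ⟪u (φ m), p⟫ - ⟪u (φ n), p⟫ =
        (⟪u (φ m), y⟫ - ⟪u (φ n), y⟫) + ⟪u (φ m), p - y⟫ - ⟪u (φ n), p - y⟫ := by
      simp only [inner_sub_right]; ring
    rw [e1]
    have := abs_add_le (⟪u (φ m), y⟫ - ⟪u (φ n), y⟫) (⟪u (φ m), p - y⟫)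
    have h2 := hbnd m
    have h3 := hbnd n
    have habs : |(⟪u (φ m), y⟫ - ⟪u (φ n), y⟫) + ⟪u (φ m), p - y⟫ - ⟪u (φ n), p - y⟫|
        ≤ |⟪u (φ m), y⟫ - ⟪u (φ n), y⟫| + |⟪u (φ m), p - y⟫| + |⟪u (φ n), p - y⟫| := by
      calc |(⟪u (φ m), y⟫ - ⟪u (φ n), y⟫) + ⟪u (φ m), p - y⟫ - ⟪u (φ n), p - y⟫|
          ≤ |(⟪u (φ m), y⟫ - ⟪u (φ n), y⟫) + ⟪u (φ m), p - y⟫| + |⟪u (φ n), p - y⟫| :=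
            abs_sub _ _
        _ ≤ |⟪u (φ m), y⟫ - ⟪u (φ n), y⟫| + |⟪u (φ m), p - y⟫| + |⟪u (φ n), p - y⟫| := by
            linarith [abs_add_le (⟪u (φ m), y⟫ - ⟪u (φ n), y⟫) (⟪u (φ m), p - y⟫)]
    linarith
  -- Step 4: define the limit functional and apply Riesz
  have hconv : ∀ w : H, ∃ L, Tendsto (fun k => ⟪u (φ k), w⟫) atTop (𝓝 L) :=
    fun w => cauchySeq_tendsto_of_complete (key w)
  choose L hL using hconv
  have hadd : ∀ w₁ w₂, L (w₁ + w₂) = L w₁ + L w₂ := by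
    intro w₁ w₂
    refine tendsto_nhds_unique (hL (w₁ + w₂)) ?_
    simpa [inner_add_right] using (hL w₁).add (hL w₂)
  have hsmul : ∀ (c : ℝ) w, L (c • w) = c * L w := by
    intro c w
    refine tendsto_nhds_unique (hL (c • w)) ?_
    simpa [inner_smul_right] using (hL w).const_mul c
  have hbound : ∀ w, |L w| ≤ C * ‖w‖ := by
    intro w
    have : Tendsto (fun k => |⟪u (φ k), w⟫|) atTop (𝓝 |L w|) := (hL w).abs
    refine le_of_tendsto this (Eventually.of_forall fun k => ?_)
    calc |⟪u (φ k), w⟫| ≤ ‖u (φ k)‖ * ‖w‖ := abs_real_inner_le_norm _ _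
      _ ≤ C * ‖w‖ := mul_le_mul_of_nonneg_right (hb _) (norm_nonneg _)
  let f : H →L[ℝ] ℝ :=
    LinearMap.mkContinuous
      { toFun := L, map_add' := hadd, map_smul' := hsmul } C
      (fun w => by simpa using hbound w)
  refine ⟨(InnerProductSpace.toDual ℝ H).symm f, φ, hφ, fun w => ?_⟩
  have : ⟪(InnerProductSpace.toDual ℝ H).symm f, w⟫ = f w :=
    InnerProductSpace.toDual_symm_apply
  rw [this]
  exact hL w

/-- Let `H` be a nonzero real Hilbert space and `B` a
continuous symmetric bilinear form with `B(u,u) > 0` for `u ≠ 0`, whose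
quadratic form is sequentially weakly continuous. Then
`μ₁ = inf {‖u‖² : B(u,u) = 1}` is attained at some `φ₁` with `B(φ₁,φ₁) = 1`,
`μ₁ > 0`, `μ₁ = inf {‖u‖²/B(u,u) : u ≠ 0}` (Rayleigh quotient), and
`⟪φ₁, v⟫ = μ₁ B(φ₁, v)` for all `v ∈ H`. -/
theorem stmt10 {H : Type*} [NormedAddCommGroup H] [InnerProductSpace ℝ H]
    [CompleteSpace H] [Nontrivial H] (B : H →L[ℝ] H →L[ℝ] ℝ)
    (hsymm : ∀ u v : H, B u v = B v u)
    (hpos : ∀ u : H, u ≠ 0 → 0 < B u u)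
    (hweak : ∀ (u : ℕ → H) (x : H),
      (∀ w : H, Tendsto (fun n => ⟪u n, w⟫) atTop (nhds ⟪x, w⟫)) →
      Tendsto (fun n => B (u n) (u n)) atTop (nhds (B x x))) :
    ∃ φ₁ : H, B φ₁ φ₁ = 1 ∧
      ‖φ₁‖ ^ 2 = sInf ((fun u : H => ‖u‖ ^ 2) '' {u : H | B u u = 1}) ∧
      0 < sInf ((fun u : H => ‖u‖ ^ 2) '' {u : H | B u u = 1}) ∧
      sInf ((fun u : H => ‖u‖ ^ 2) '' {u : H | B u u = 1}) =
        sInf ((fun u : H => ‖u‖ ^ 2 / B u u) '' {u : H | u ≠ 0}) ∧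
      (∀ v : H, ⟪φ₁, v⟫ =
        sInf ((fun u : H => ‖u‖ ^ 2) '' {u : H | B u u = 1}) * B φ₁ v) := by
  classical
  set S : Set H := {u : H | B u u = 1} with hS
  set A : Set ℝ := (fun u : H => ‖u‖ ^ 2) '' S with hA
  -- normalization
  have hnorm : ∀ z : H, z ≠ 0 → ∃ w : H, B w w = 1 ∧ ‖w‖ ^ 2 = ‖z‖ ^ 2 / B z z := by
    intro z hz
    have hBz : 0 < B z z := hpos z hz
    set c : ℝ := Real.sqrt (B z z) with hc
    have hcpos : 0 < c := Real.sqrt_pos.mpr hBz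
    have hc2 : c * c = B z z := Real.mul_self_sqrt hBz.le
    refine ⟨c⁻¹ • z, ?_, ?_⟩
    · have h1 : B (c⁻¹ • z) (c⁻¹ • z) = c⁻¹ * (c⁻¹ * B z z) := by
        simp [map_smul, ContinuousLinearMap.smul_apply, smul_eq_mul]
      rw [h1, ← hc2]
      field_simp
    · rw [norm_smul, norm_inv, Real.norm_eq_abs, abs_of_pos hcpos, mul_pow, inv_pow,
        div_eq_mul_inv, mul_comm]
      congr 1
      rw [← hc2]
      ring
  have hSne : S.Nonempty := by
    obtain ⟨z, hz⟩ := exists_ne (0 : H)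
    obtain ⟨w, hw, -⟩ := hnorm z hz
    exact ⟨w, hw⟩
  have hAne : A.Nonempty := hSne.image _
  have hBn : ∀ u : H, B u u ≤ ‖B‖ * ‖u‖ ^ 2 := by
    intro u
    calc B u u ≤ |B u u| := le_abs_self _
      _ = ‖B u u‖ := rfl
      _ ≤ ‖B u‖ * ‖u‖ := (B u).le_opNorm u
      _ ≤ ‖B‖ * ‖u‖ * ‖u‖ := mul_le_mul_of_nonneg_right (B.le_opNorm u) (norm_nonneg _)
      _ = ‖B‖ * ‖u‖ ^ 2 := by ring
  have hBnorm_pos : 0 < ‖B‖ := by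
    obtain ⟨w0, hw0⟩ := hSne
    rcases (norm_nonneg B).lt_or_eq with h | h
    · exact h
    · exfalso
      have := hBn w0
      rw [hS] at hw0
      simp only [Set.mem_setOf_eq] at hw0
      rw [hw0, ← h] at this
      nlinarith
  have hlow : ∀ a ∈ A, ‖B‖⁻¹ ≤ a := by
    rintro a ⟨z, hz, rfl⟩
    rw [hS] at hz
    simp only [Set.mem_setOf_eq] at hz
    have h1 := hBn z
    rw [hz] at h1
    rw [inv_eq_one_div, div_le_iff₀ hBnorm_pos]
    show (1:ℝ) ≤ ‖z‖ ^ 2 * ‖B‖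
    nlinarith
  have hbdd : BddBelow A := ⟨‖B‖⁻¹, hlow⟩
  set μ : ℝ := sInf A with hμ
  have hμpos : 0 < μ := lt_of_lt_of_le (inv_pos.mpr hBnorm_pos) (le_csInf hAne hlow)
  -- minimizing sequence
  have hseq : ∀ n : ℕ, ∃ z : H, z ∈ S ∧ ‖z‖ ^ 2 < μ + 1 / (n + 1 : ℝ) := by
    intro n
    have hlt : μ < μ + 1 / (n + 1 : ℝ) := by
      have : (0:ℝ) < 1 / (n + 1 : ℝ) := by positivity
      linarith
    obtain ⟨a, ⟨z, hzS, rfl⟩, hlt2⟩ := exists_lt_of_csInf_lt hAne hlt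
    exact ⟨z, hzS, hlt2⟩
  choose w hwS hwlt using hseq
  have hwS' : ∀ n, B (w n) (w n) = 1 := fun n => hwS n
  have hwb : ∀ n, ‖w n‖ ≤ Real.sqrt (μ + 1) := by
    intro n
    have h1 : ‖w n‖ ^ 2 ≤ μ + 1 := by
      have h2 : 1 / (n + 1 : ℝ) ≤ 1 := by
        rw [div_le_one (by positivity)]
        have : (0:ℝ) ≤ n := Nat.cast_nonneg n
        linarith
      linarith [hwlt n]
    have := Real.sqrt_le_sqrt h1
    rwa [Real.sqrt_sq (norm_nonneg _)] at this
  obtain ⟨x, φ, hφ, hx⟩ := weak_compact_aux w (Real.sqrt (μ + 1)) hwb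
  -- B x x = 1
  have hBx : B x x = 1 := by
    have h1 := hweak (fun k => w (φ k)) x (fun v => hx v)
    have h2 : (fun k => B (w (φ k)) (w (φ k))) = fun _ => (1:ℝ) :=
      funext fun k => hwS' (φ k)
    rw [h2] at h1
    exact tendsto_nhds_unique h1 tendsto_const_nhds
  have hxne : x ≠ 0 := by
    intro h
    rw [h] at hBx
    simp at hBx
  -- ‖x‖² ≤ μ
  have hxle : ‖x‖ ^ 2 ≤ μ := by
    have hxx : Tendsto (fun k => ⟪w (φ k), x⟫) atTop (𝓝 (‖x‖ ^ 2)) := by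
      have := hx x
      rwa [real_inner_self_eq_norm_sq] at this
    have hub : ∀ k : ℕ, ⟪w (φ k), x⟫ ≤ Real.sqrt (μ + 1 / (k + 1 : ℝ)) * ‖x‖ := by
      intro k
      have h1 : ⟪w (φ k), x⟫ ≤ ‖w (φ k)‖ * ‖x‖ := real_inner_le_norm _ _
      have h2 : ‖w (φ k)‖ ≤ Real.sqrt (μ + 1 / (φ k + 1 : ℝ)) := by
        have := Real.sqrt_le_sqrt (le_of_lt (hwlt (φ k)))
        rwa [Real.sqrt_sq (norm_nonneg _)] at this
      have h3 : Real.sqrt (μ + 1 / (φ k + 1 : ℝ)) ≤ Real.sqrt (μ + 1 / (k + 1 : ℝ)) := by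
        apply Real.sqrt_le_sqrt
        have hk' : k ≤ φ k := hφ.le_apply
        have hk : (k : ℝ) + 1 ≤ (φ k : ℝ) + 1 := by
          have := (Nat.cast_le (α := ℝ)).mpr hk'
          linarith
        have := one_div_le_one_div_of_le (by positivity : (0:ℝ) < (k:ℝ) + 1) hk
        linarith
      calc ⟪w (φ k), x⟫ ≤ ‖w (φ k)‖ * ‖x‖ := h1
        _ ≤ Real.sqrt (μ + 1 / (k + 1 : ℝ)) * ‖x‖ :=
            mul_le_mul_of_nonneg_right (h2.trans h3) (norm_nonneg _)
    have hlim : Tendsto (fun k : ℕ => Real.sqrt (μ + 1 / (k + 1 : ℝ)) * ‖x‖) atTop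
        (𝓝 (Real.sqrt μ * ‖x‖)) := by
      have h1 : Tendsto (fun k : ℕ => μ + 1 / (k + 1 : ℝ)) atTop (𝓝 μ) := by
        have := tendsto_one_div_add_atTop_nhds_zero_nat (𝕜 := ℝ)
        have h2 := this.const_add μ
        simpa using h2
      exact ((Real.continuous_sqrt.tendsto μ).comp h1).mul_const _
    have hmain : ‖x‖ ^ 2 ≤ Real.sqrt μ * ‖x‖ :=
      le_of_tendsto_of_tendsto' hxx hlim hub
    have hxn : 0 < ‖x‖ := norm_pos_iff.mpr hxne
    have h4 : ‖x‖ ≤ Real.sqrt μ := by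
      have := hmain
      rw [sq] at this
      exact le_of_mul_le_mul_right (by linarith [this]) hxn
    calc ‖x‖ ^ 2 ≤ Real.sqrt μ ^ 2 := by
          apply pow_le_pow_left₀ (norm_nonneg _) h4
      _ = μ := Real.sq_sqrt hμpos.le
  have hxge : μ ≤ ‖x‖ ^ 2 := csInf_le hbdd ⟨x, hBx, rfl⟩
  have hxeq : ‖x‖ ^ 2 = μ := le_antisymm hxle hxge
  -- Rayleigh characterization
  have hsets : A = (fun u : H => ‖u‖ ^ 2 / B u u) '' {u : H | u ≠ 0} := by
    apply Set.Subset.antisymm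
    · rintro a ⟨z, hz, rfl⟩
      rw [hS] at hz; simp only [Set.mem_setOf_eq] at hz
      have hz0 : z ≠ 0 := by
        intro h; rw [h] at hz; simp at hz
      exact ⟨z, hz0, by simp [hz]⟩
    · rintro a ⟨z, hz0, rfl⟩
      obtain ⟨w', hw1, hw2⟩ := hnorm z hz0
      exact ⟨w', hw1, hw2⟩
  have hray : ∀ z : H, μ * B z z ≤ ‖z‖ ^ 2 := by
    intro z
    rcases eq_or_ne z 0 with rfl | hz0
    · simp
    · have hBz := hpos z hz0
      have hμle : μ ≤ ‖z‖ ^ 2 / B z z := csInf_le hbdd (hsets ▸ ⟨z, hz0, rfl⟩)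
      calc μ * B z z ≤ (‖z‖ ^ 2 / B z z) * B z z :=
            mul_le_mul_of_nonneg_right hμle hBz.le
        _ = ‖z‖ ^ 2 := div_mul_cancel₀ _ hBz.ne'
  -- eigenvalue equation
  have heig : ∀ v : H, ⟪x, v⟫ = μ * B x v := by
    intro v
    set b : ℝ := ⟪x, v⟫ - μ * B x v with hb
    set a : ℝ := ‖v‖ ^ 2 - μ * B v v with ha
    have hq : ∀ t : ℝ, 0 ≤ a * t ^ 2 + 2 * b * t := by
      intro t
      have h1 := hray (x + t • v)
      have h2 : ‖x + t • v‖ ^ 2 = ‖x‖ ^ 2 + 2 * t * ⟪x, v⟫ + t ^ 2 * ‖v‖ ^ 2 := by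
        rw [norm_add_sq_real, real_inner_smul_right, norm_smul, Real.norm_eq_abs, mul_pow,
          sq_abs]
        ring
      have h3 : B (x + t • v) (x + t • v)
          = B x x + 2 * t * B x v + t ^ 2 * B v v := by
        simp only [map_add, map_smul, ContinuousLinearMap.add_apply,
          ContinuousLinearMap.smul_apply, smul_eq_mul]
        rw [hsymm v x]
        ring
      have h4 : ‖x‖ ^ 2 = μ * B x x := by rw [hBx, hxeq]; ring
      rw [h2, h3] at h1
      have expand : a * t ^ 2 + 2 * b * t =
          (‖x‖ ^ 2 + 2 * t * ⟪x, v⟫ + t ^ 2 * ‖v‖ ^ 2)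
            - μ * (B x x + 2 * t * B x v + t ^ 2 * B v v) := by
        rw [ha, hb, h4]; ring
      rw [expand]
      linarith
    have hb0 : b = 0 := by
      by_contra hbne
      have h1 : (0:ℝ) < |a| + 1 := by positivity
      have ht := hq (-b / (|a| + 1))
      have key : a * (-b / (|a| + 1)) ^ 2 + 2 * b * (-b / (|a| + 1))
          = (b ^ 2 / (|a| + 1)) * (a / (|a| + 1) - 2) := by
        field_simp
        ring
      rw [key] at ht
      have h2 : a / (|a| + 1) - 2 < 0 := by
        have ha1 : a / (|a| + 1) < 1 :=
          (div_lt_one h1).mpr (lt_of_le_of_lt (le_abs_self a) (lt_add_one _))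
        linarith
      have h3 : 0 < b ^ 2 / (|a| + 1) := by
        apply div_pos _ h1
        positivity
      nlinarith
    linarith
  exact ⟨x, hBx, hxeq, hμpos, by rw [← hsets], heig⟩
end

section
/- Let H be an infinite-dimensional real Hilbert space and B : H × H → ℝ a continuous symmetric bilinear form with B(u,u) > 0 for every u ≠ 0, whose quadratic form q(u) = B(u,u) is sequentially weakly continuous. Then there exist a sequence of real numbers (μ_j)_{j≥1} and a sequence (φ_j)_{j≥1} in H such that: (1) 0 < μ₁ ≤ μ₂ ≤ μ₃ ≤ ⋯ and μ_j → ∞ as j → ∞; (2) ⟨φ_j, v⟩ = μ_j B(φ_j, v) for all v ∈ H and all j; (3) B(φ_i, φ_j) = 1 if i = j and 0 if i ≠ j (B-orthonormality), and ⟨φ_i, φ_j⟩ = 0 for i ≠ j ((A,Σ)-orthogonality); (4) μ₁ = inf{‖u‖² : B(u,u) = 1} and, for each j ≥ 1, μ_{j+1} = inf{‖u‖² : B(u,u) = 1 and B(u, φ_i) = 0 for all i ≤ j}, and these infima are attained at φ₁ and φ_{j+1} respectively. -/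
open Filter Topology
open scoped RealInnerProductSpace


lemma quadCoeff (a b : ℝ) (h : ∀ t : ℝ, 0 ≤ a * t ^ 2 + b * t) : b = 0 := by
  have h0 := h (-b / (|a| + 1))
  have ha : (0:ℝ) < |a| + 1 := by positivity
  have hla : a ≤ |a| := le_abs_self a
  have key : 0 ≤ (a - (|a| + 1)) * b ^ 2 / (|a| + 1) ^ 2 := by
    have : a * (-b / (|a| + 1)) ^ 2 + b * (-b / (|a| + 1))
        = (a - (|a| + 1)) * b ^ 2 / (|a| + 1) ^ 2 := by
      field_simp; ring
    linarith [this ▸ h0]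
  have k2 : 0 ≤ (a - (|a| + 1)) * b ^ 2 := by
    have hsq : (0:ℝ) < (|a| + 1) ^ 2 := by positivity
    calc (0:ℝ) ≤ (a - (|a| + 1)) * b ^ 2 / (|a| + 1) ^ 2 * (|a| + 1) ^ 2 := by positivity
      _ = (a - (|a| + 1)) * b ^ 2 := by field_simp
  have hb2 : b ^ 2 ≤ 0 := by nlinarith
  have := sq_nonneg b
  nlinarith

/-- Weak sequential compactness of bounded sequences in a Hilbert space. -/
lemma weak_seq_compact {H : Type*} [NormedAddCommGroup H] [InnerProductSpace ℝ H]
    [CompleteSpace H] (u : ℕ → H) (C : ℝ) (hC : ∀ n, ‖u n‖ ≤ C) :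
    ∃ (x : H) (g : ℕ → ℕ), StrictMono g ∧
      ∀ w : H, Tendsto (fun k => ⟪u (g k), w⟫) atTop (nhds ⟪x, w⟫) := by
  have hC0 : 0 ≤ C := le_trans (norm_nonneg _) (hC 0)
  -- sequence of inner products lives in a compact metrizable product
  set v : ℕ → (ℕ → ℝ) := fun n m => ⟪u n, u m⟫ with hv
  have hvK : ∀ n, v n ∈ Set.pi Set.univ (fun _ : ℕ => Set.Icc (-(C*C)) (C*C)) := by
    intro n m _
    have := abs_real_inner_le_norm (u n) (u m)
    have h1 : |⟪u n, u m⟫| ≤ C * C :=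
      this.trans (mul_le_mul (hC n) (hC m) (norm_nonneg _) hC0)
    exact abs_le.1 h1
  have hK : IsCompact (Set.pi Set.univ (fun _ : ℕ => Set.Icc (-(C*C)) (C*C))) :=
    isCompact_univ_pi fun _ => isCompact_Icc
  obtain ⟨l, -, g, hg, hgl⟩ := hK.isSeqCompact.subseq_of_frequently_in
    (Frequently.of_forall fun n => hvK n)
  have hptwise : ∀ m, Tendsto (fun k => ⟪u (g k), u m⟫) atTop (nhds (l m)) := by
    intro m
    exact (tendsto_pi_nhds.1 hgl m)
  -- convergence on the span of the range of u
  have hspan : ∀ w ∈ Submodule.span ℝ (Set.range u),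
      ∃ r : ℝ, Tendsto (fun k => ⟪u (g k), w⟫) atTop (nhds r) := by
    intro w hw
    induction hw using Submodule.span_induction with
    | mem y hy =>
      obtain ⟨m, rfl⟩ := hy
      exact ⟨l m, hptwise m⟩
    | zero =>
      exact ⟨0, by simpa using tendsto_const_nhds⟩
    | add y z _ _ hy hz =>
      obtain ⟨ry, hry⟩ := hy
      obtain ⟨rz, hrz⟩ := hz
      exact ⟨ry + rz, by simpa [inner_add_right] using hry.add hrz⟩
    | smul a y _ hy =>
      obtain ⟨ry, hry⟩ := hy
      exact ⟨a * ry, by simpa [real_inner_smul_right] using hry.const_mul a⟩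
  -- Cauchy for every w
  set s : Submodule ℝ H := Submodule.span ℝ (Set.range u) with hs
  set Kc : Submodule ℝ H := s.topologicalClosure with hKc
  haveI : CompleteSpace Kc := Submodule.isClosed_topologicalClosure s |>.completeSpace_coe
  have hmem : ∀ n, u n ∈ Kc :=
    fun n => Submodule.le_topologicalClosure s (Submodule.subset_span ⟨n, rfl⟩)
  have hcauchy : ∀ w : H, CauchySeq (fun k => ⟪u (g k), w⟫) := by
    intro w
    set p : H := (Kc.orthogonalProjectionOnto w : H) with hp
    have hwp : ∀ n, ⟪u n, w⟫ = ⟪u n, p⟫ := by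
      intro n
      have horth : w - p ∈ Kcᗮ := Kc.sub_starProjection_mem_orthogonal w
      have h0 : ⟪u n, w - p⟫ = (0:ℝ) := horth (u n) (hmem n)
      rw [inner_sub_right] at h0
      linarith
    rw [Metric.cauchySeq_iff]
    intro ε hε
    -- approximate p by an element of the span
    have hpcl : p ∈ closure (s : Set H) := by
      have : p ∈ Kc := Submodule.coe_mem _
      rw [← Submodule.topologicalClosure_coe]; exact this
    have hεC : 0 < ε / 3 / (C + 1) := by positivity
    obtain ⟨y, hy, hyd⟩ := Metric.mem_closure_iff.1 hpcl _ hεC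
    obtain ⟨r, hr⟩ := hspan y hy
    have hrC : CauchySeq (fun k => ⟪u (g k), y⟫) := hr.cauchySeq
    obtain ⟨N, hN⟩ := Metric.cauchySeq_iff.1 hrC (ε / 3) (by positivity)
    refine ⟨N, fun m hm n hn => ?_⟩
    have hub : ∀ k, |⟪u (g k), p⟫ - ⟪u (g k), y⟫| < ε / 3 := by
      intro k
      have h1 : ⟪u (g k), p⟫ - ⟪u (g k), y⟫ = ⟪u (g k), p - y⟫ := by
        rw [inner_sub_right]
      rw [h1]
      calc |⟪u (g k), p - y⟫| ≤ ‖u (g k)‖ * ‖p - y‖ := abs_real_inner_le_norm _ _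
        _ ≤ C * ‖p - y‖ := by
            apply mul_le_mul_of_nonneg_right (hC _) (norm_nonneg _)
        _ < (C + 1) * (ε / 3 / (C + 1)) := by
            apply mul_lt_mul' (by linarith) ?_ (norm_nonneg _) (by linarith)
            rw [← dist_eq_norm]
            exact hyd
        _ = ε / 3 := by field_simp
    have h2 := hN m hm n hn
    rw [Real.dist_eq] at h2 ⊢
    rw [hwp (g m), hwp (g n)]
    calc |⟪u (g m), p⟫ - ⟪u (g n), p⟫|
        ≤ |⟪u (g m), p⟫ - ⟪u (g m), y⟫| + |⟪u (g m), y⟫ - ⟪u (g n), p⟫| :=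
          abs_sub_le _ _ _
      _ ≤ |⟪u (g m), p⟫ - ⟪u (g m), y⟫| +
          (|⟪u (g m), y⟫ - ⟪u (g n), y⟫| + |⟪u (g n), y⟫ - ⟪u (g n), p⟫|) := by
          gcongr
          exact abs_sub_le _ _ _
      _ < ε / 3 + (ε / 3 + ε / 3) :=
          add_lt_add (hub m) (add_lt_add h2 (by rw [abs_sub_comm]; exact hub n))
      _ = ε := by ring
  -- build the limiting functional
  have hlim : ∀ w : H, Tendsto (fun k => ⟪u (g k), w⟫) atTop
      (nhds (limUnder atTop (fun k => ⟪u (g k), w⟫))) := by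
    intro w
    obtain ⟨r, hr⟩ := cauchySeq_tendsto_of_complete (hcauchy w)
    rwa [hr.limUnder_eq]
  set F0 : H → ℝ := fun w => limUnder atTop (fun k => ⟪u (g k), w⟫) with hF0
  have hadd : ∀ w z : H, F0 (w + z) = F0 w + F0 z := by
    intro w z
    refine tendsto_nhds_unique (hlim (w + z)) ?_
    simpa [inner_add_right] using (hlim w).add (hlim z)
  have hsmul : ∀ (a : ℝ) (w : H), F0 (a • w) = a * F0 w := by
    intro a w
    refine tendsto_nhds_unique (hlim (a • w)) ?_
    simpa [real_inner_smul_right] using (hlim w).const_mul a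
  have hbound : ∀ w : H, |F0 w| ≤ C * ‖w‖ := by
    intro w
    have : Tendsto (fun k => |⟪u (g k), w⟫|) atTop (nhds |F0 w|) := (hlim w).abs
    refine le_of_tendsto this (Eventually.of_forall fun k => ?_)
    exact (abs_real_inner_le_norm _ _).trans
      (mul_le_mul_of_nonneg_right (hC _) (norm_nonneg _))
  set F : H →L[ℝ] ℝ := LinearMap.mkContinuous
    { toFun := F0, map_add' := hadd, map_smul' := hsmul } C
    (fun w => by simpa using hbound w) with hF
  refine ⟨(InnerProductSpace.toDual ℝ H).symm F, g, hg, fun w => ?_⟩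
  have : ⟪(InnerProductSpace.toDual ℝ H).symm F, w⟫ = F w :=
    InnerProductSpace.toDual_symm_apply
  rw [this]
  exact hlim w

section LemB
variable {H : Type*} [NormedAddCommGroup H] [InnerProductSpace ℝ H] [CompleteSpace H]

lemma lemB (hinf : ¬ FiniteDimensional ℝ H) (B : H →L[ℝ] H →L[ℝ] ℝ)
    (hsymm : ∀ u v : H, B u v = B v u)
    (hpos : ∀ u : H, u ≠ 0 → 0 < B u u)
    (hweak : ∀ (u : ℕ → H) (x : H),
      (∀ w : H, Tendsto (fun n => ⟪u n, w⟫) atTop (nhds ⟪x, w⟫)) →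
      Tendsto (fun n => B (u n) (u n)) atTop (nhds (B x x)))
    (n : ℕ) (c : Fin n → H) :
    ∃ φ : H, B φ φ = 1 ∧ (∀ i, B φ (c i) = 0) ∧
      ‖φ‖ ^ 2 = sInf ((fun u : H => ‖u‖ ^ 2) ''
        {u : H | B u u = 1 ∧ ∀ i, B u (c i) = 0}) ∧
      ∀ v : H, (∀ i, B v (c i) = 0) → ⟪φ, v⟫ = ‖φ‖ ^ 2 * B φ v := by
  set S : Set H := {u : H | B u u = 1 ∧ ∀ i, B u (c i) = 0} with hS
  -- S is nonempty
  have hex : ∃ v : H, v ≠ 0 ∧ ∀ i, B v (c i) = 0 := by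
    by_contra hcon
    push_neg at hcon
    set L : H →ₗ[ℝ] (Fin n → ℝ) :=
      LinearMap.pi (fun i => ((B.flip (c i)) : H →L[ℝ] ℝ).toLinearMap) with hL
    have hinj : Function.Injective L := by
      rw [← LinearMap.ker_eq_bot, LinearMap.ker_eq_bot']
      intro v hv
      by_contra hv0
      obtain ⟨i, hi⟩ := hcon v hv0
      have : L v i = 0 := by rw [hv]; rfl
      exact hi (by simpa [hL, ContinuousLinearMap.flip_apply] using this)
    exact hinf (FiniteDimensional.of_injective L hinj)
  obtain ⟨v, hv0, hvc⟩ := hex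
  have hb : 0 < B v v := hpos v hv0
  have hSne : S.Nonempty := by
    refine ⟨(Real.sqrt (B v v))⁻¹ • v, ?_, ?_⟩
    · have hsq : Real.sqrt (B v v) * Real.sqrt (B v v) = B v v :=
        Real.mul_self_sqrt hb.le
      have hsne : Real.sqrt (B v v) ≠ 0 := by positivity
      simp only [map_smul, ContinuousLinearMap.smul_apply, smul_eq_mul]
      field_simp
      rw [Real.sq_sqrt hb.le]
    · intro i
      simp [map_smul, ContinuousLinearMap.smul_apply, hvc i]
  set m : ℝ := sInf ((fun u : H => ‖u‖ ^ 2) '' S) with hm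
  have hbdd : BddBelow ((fun u : H => ‖u‖ ^ 2) '' S) := by
    refine ⟨0, fun x hx => ?_⟩
    obtain ⟨y, -, rfl⟩ := hx
    positivity
  have hm0 : 0 ≤ m := le_csInf (hSne.image _) (by rintro x ⟨y, -, rfl⟩; positivity)
  -- minimizing sequence
  have hms : ∀ k : ℕ, ∃ u : H, u ∈ S ∧ ‖u‖ ^ 2 < m + 1 / (k + 1) := by
    intro k
    have h1 : m < m + 1 / (k + 1 : ℝ) := by
      have : (0:ℝ) < 1 / (k + 1 : ℝ) := by positivity
      linarith
    obtain ⟨x, hx, hlt⟩ := exists_lt_of_csInf_lt (hSne.image _) h1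
    obtain ⟨y, hy, rfl⟩ := hx
    exact ⟨y, hy, hlt⟩
  choose w hwS hwlt using hms
  have hwle : ∀ k, m ≤ ‖w k‖ ^ 2 := fun k => csInf_le hbdd ⟨w k, hwS k, rfl⟩
  have hwC : ∀ k, ‖w k‖ ≤ Real.sqrt (m + 1) := by
    intro k
    have h1 : ‖w k‖ ^ 2 ≤ m + 1 := by
      have : 1 / (k + 1 : ℝ) ≤ 1 := by
        rw [div_le_one (by positivity)]
        simp
      linarith [hwlt k]
    have := Real.sqrt_le_sqrt h1
    rwa [Real.sqrt_sq (norm_nonneg _)] at this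
  have hnormlim : Tendsto (fun k => ‖w k‖ ^ 2) atTop (nhds m) := by
    have hup : Tendsto (fun k : ℕ => m + 1 / (k + 1 : ℝ)) atTop (nhds m) := by
      have := tendsto_one_div_add_atTop_nhds_zero_nat (𝕜 := ℝ)
      simpa using tendsto_const_nhds.add this
    exact tendsto_of_tendsto_of_tendsto_of_le_of_le tendsto_const_nhds hup
      (fun k => hwle k) (fun k => (hwlt k).le)
  obtain ⟨x, g, hg, hwk⟩ := weak_seq_compact w (Real.sqrt (m + 1)) hwC
  -- B x x = 1
  have hBxx : B x x = 1 := by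
    have h1 := hweak (fun k => w (g k)) x (fun ww => hwk ww)
    have h2 : (fun k => B (w (g k)) (w (g k))) = fun _ => (1:ℝ) :=
      funext fun k => (hwS (g k)).1
    rw [h2] at h1
    exact (tendsto_nhds_unique tendsto_const_nhds h1).symm
  -- constraints hold at x
  have hxc : ∀ i, B x (c i) = 0 := by
    intro i
    have h1 := hweak (fun k => w (g k) + c i) (x + c i) (by
      intro ww
      have := (hwk ww).add (tendsto_const_nhds (x := ⟪c i, ww⟫))
      simpa [inner_add_left] using this)
    have h2 : (fun k => B (w (g k) + c i) (w (g k) + c i))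
        = fun _ => 1 + B (c i) (c i) := by
      funext k
      have hc1 := (hwS (g k)).1
      have hc2 := (hwS (g k)).2 i
      have hc3 : B (c i) (w (g k)) = 0 := by rw [hsymm]; exact hc2
      simp only [map_add, ContinuousLinearMap.add_apply]
      rw [hc1, hc2, hc3]; ring
    rw [h2] at h1
    have h3 : B (x + c i) (x + c i) = 1 + B (c i) (c i) :=
      tendsto_nhds_unique h1 tendsto_const_nhds
    have h4 : B (c i) x = B x (c i) := hsymm _ _
    simp only [map_add, ContinuousLinearMap.add_apply] at h3
    rw [hBxx, h4] at h3
    linarith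
  have hxS : x ∈ S := ⟨hBxx, hxc⟩
  have hxge : m ≤ ‖x‖ ^ 2 := csInf_le hbdd ⟨x, hxS, rfl⟩
  have hx0 : x ≠ 0 := by
    intro h
    rw [h] at hBxx
    simp at hBxx
  have hxn : 0 < ‖x‖ ^ 2 := by
    have := norm_pos_iff.2 hx0
    positivity
  have hxle : ‖x‖ ^ 2 ≤ m := by
    have hi : Tendsto (fun k => ⟪w (g k), x⟫) atTop (nhds (‖x‖ ^ 2)) := by
      have := hwk x
      rwa [real_inner_self_eq_norm_sq] at this
    have hsq : Tendsto (fun k => ⟪w (g k), x⟫ ^ 2) atTop (nhds ((‖x‖ ^ 2) ^ 2)) :=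
      hi.pow 2
    have hrhs : Tendsto (fun k => ‖w (g k)‖ ^ 2 * ‖x‖ ^ 2) atTop
        (nhds (m * ‖x‖ ^ 2)) :=
      (hnormlim.comp hg.tendsto_atTop).mul_const _
    have hub : ∀ k, ⟪w (g k), x⟫ ^ 2 ≤ ‖w (g k)‖ ^ 2 * ‖x‖ ^ 2 := by
      intro k
      have h := abs_real_inner_le_norm (w (g k)) x
      nlinarith [norm_nonneg (w (g k)), norm_nonneg x, sq_abs (⟪w (g k), x⟫),
        abs_nonneg (⟪w (g k), x⟫)]
    have := le_of_tendsto_of_tendsto' hsq hrhs hub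
    nlinarith
  have heq : ‖x‖ ^ 2 = m := le_antisymm hxle hxge
  -- key inequality on the constrained subspace
  have hkey : ∀ v : H, (∀ i, B v (c i) = 0) → m * B v v ≤ ‖v‖ ^ 2 := by
    intro v hvcc
    rcases eq_or_ne v 0 with rfl | hvne
    · simp
    · have hbv : 0 < B v v := hpos v hvne
      have hsq : Real.sqrt (B v v) * Real.sqrt (B v v) = B v v :=
        Real.mul_self_sqrt hbv.le
      have hsne : Real.sqrt (B v v) ≠ 0 := by positivity
      have hmem : (Real.sqrt (B v v))⁻¹ • v ∈ S := by
        constructor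
        · simp only [map_smul, ContinuousLinearMap.smul_apply, smul_eq_mul]
          field_simp
          rw [Real.sq_sqrt hbv.le]
        · intro i
          simp [map_smul, ContinuousLinearMap.smul_apply, hvcc i]
      have h1 : m ≤ ‖(Real.sqrt (B v v))⁻¹ • v‖ ^ 2 :=
        csInf_le hbdd ⟨_, hmem, rfl⟩
      have h2 : ‖(Real.sqrt (B v v))⁻¹ • v‖ ^ 2 = (B v v)⁻¹ * ‖v‖ ^ 2 := by
        rw [norm_smul]
        rw [mul_pow]
        congr 1
        rw [Real.norm_eq_abs, abs_inv, abs_of_nonneg (Real.sqrt_nonneg _)]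
        rw [← Real.sqrt_inv]
        rw [Real.sq_sqrt (by positivity)]
      rw [h2] at h1
      rw [← sub_nonneg] at h1 ⊢
      have h3 : (B v v)⁻¹ * ‖v‖ ^ 2 - m = (B v v)⁻¹ * (‖v‖ ^ 2 - m * B v v) := by
        field_simp
      rw [h3] at h1
      nlinarith [inv_pos.2 hbv]
  -- Euler–Lagrange equation
  refine ⟨x, hBxx, hxc, by rw [heq], ?_⟩
  intro v hvcc
  have hq : ∀ t : ℝ, 0 ≤ (‖v‖ ^ 2 - m * B v v) * t ^ 2
      + (2 * (⟪x, v⟫ - m * B x v)) * t := by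
    intro t
    have hcons : ∀ i, B (x + t • v) (c i) = 0 := by
      intro i
      simp [map_add, ContinuousLinearMap.add_apply, map_smul,
        ContinuousLinearMap.smul_apply, hxc i, hvcc i]
    have h1 := hkey (x + t • v) hcons
    have h2 : ‖x + t • v‖ ^ 2 = ‖x‖ ^ 2 + 2 * (t * ⟪x, v⟫) + t ^ 2 * ‖v‖ ^ 2 := by
      rw [norm_add_sq_real, real_inner_smul_right, norm_smul]
      rw [Real.norm_eq_abs, mul_pow, sq_abs]
    have h3 : B (x + t • v) (x + t • v)
        = B x x + 2 * (t * B x v) + t ^ 2 * B v v := by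
      simp only [map_add, ContinuousLinearMap.add_apply, map_smul,
        ContinuousLinearMap.smul_apply, smul_eq_mul]
      rw [hsymm v x]; ring
    rw [h2, h3, hBxx] at h1
    nlinarith [h1, heq]
  have := quadCoeff _ _ hq
  rw [heq]
  linarith
end LemB

section Recur
variable {H : Type*} [NormedAddCommGroup H] [InnerProductSpace ℝ H] [CompleteSpace H]

noncomputable def phiSeq (hinf : ¬ FiniteDimensional ℝ H) (B : H →L[ℝ] H →L[ℝ] ℝ)
    (hsymm : ∀ u v : H, B u v = B v u)
    (hpos : ∀ u : H, u ≠ 0 → 0 < B u u)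
    (hweak : ∀ (u : ℕ → H) (x : H),
      (∀ w : H, Tendsto (fun n => ⟪u n, w⟫) atTop (nhds ⟪x, w⟫)) →
      Tendsto (fun n => B (u n) (u n)) atTop (nhds (B x x))) : ℕ → H
  | n => (lemB hinf B hsymm hpos hweak n
      (fun i : Fin n => phiSeq hinf B hsymm hpos hweak i)).choose
  termination_by n => n
  decreasing_by all_goals exact i.isLt

lemma phiSeq_spec (hinf : ¬ FiniteDimensional ℝ H) (B : H →L[ℝ] H →L[ℝ] ℝ)
    (hsymm : ∀ u v : H, B u v = B v u)
    (hpos : ∀ u : H, u ≠ 0 → 0 < B u u)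
    (hweak : ∀ (u : ℕ → H) (x : H),
      (∀ w : H, Tendsto (fun n => ⟪u n, w⟫) atTop (nhds ⟪x, w⟫)) →
      Tendsto (fun n => B (u n) (u n)) atTop (nhds (B x x))) (n : ℕ) :
    B (phiSeq hinf B hsymm hpos hweak n) (phiSeq hinf B hsymm hpos hweak n) = 1 ∧
    (∀ i : Fin n, B (phiSeq hinf B hsymm hpos hweak n)
      (phiSeq hinf B hsymm hpos hweak i) = 0) ∧
    ‖phiSeq hinf B hsymm hpos hweak n‖ ^ 2 = sInf ((fun u : H => ‖u‖ ^ 2) ''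
      {u : H | B u u = 1 ∧ ∀ i : Fin n, B u (phiSeq hinf B hsymm hpos hweak i) = 0}) ∧
    ∀ v : H, (∀ i : Fin n, B v (phiSeq hinf B hsymm hpos hweak i) = 0) →
      ⟪phiSeq hinf B hsymm hpos hweak n, v⟫
        = ‖phiSeq hinf B hsymm hpos hweak n‖ ^ 2 * B (phiSeq hinf B hsymm hpos hweak n) v := by
  rw [phiSeq]
  exact (lemB hinf B hsymm hpos hweak n
    (fun i : Fin n => phiSeq hinf B hsymm hpos hweak i)).choose_spec

end Recur

/-- Let `H` be an infinite-dimensional real Hilbert space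
and `B` a continuous symmetric bilinear form with `B(u,u) > 0` for `u ≠ 0`,
whose quadratic form is sequentially weakly continuous. Then there exist
sequences `(μ_j)` of reals and `(φ_j)` in `H` (indexed by `ℕ`, so `μ 0 = μ₁`)
such that: (1) `0 < μ₁ ≤ μ₂ ≤ ⋯` and `μ_j → ∞`; (2) `⟪φ_j, v⟫ = μ_j B(φ_j, v)`
for all `v`; (3) `B(φ_i,φ_j) = δ_{ij}` and `⟪φ_i, φ_j⟫ = 0` for `i ≠ j`;
(4) `μ₁ = inf {‖u‖² : B(u,u) = 1}` attained at `φ₁`, and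
`μ_{j+1} = inf {‖u‖² : B(u,u) = 1, B(u,φ_i) = 0 ∀ i ≤ j}` attained at
`φ_{j+1}`. -/
theorem stmt11 {H : Type*} [NormedAddCommGroup H] [InnerProductSpace ℝ H]
    [CompleteSpace H] (hinf : ¬ FiniteDimensional ℝ H)
    (B : H →L[ℝ] H →L[ℝ] ℝ)
    (hsymm : ∀ u v : H, B u v = B v u)
    (hpos : ∀ u : H, u ≠ 0 → 0 < B u u)
    (hweak : ∀ (u : ℕ → H) (x : H),
      (∀ w : H, Tendsto (fun n => ⟪u n, w⟫) atTop (nhds ⟪x, w⟫)) →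
      Tendsto (fun n => B (u n) (u n)) atTop (nhds (B x x))) :
    ∃ (μ : ℕ → ℝ) (φ : ℕ → H),
      (0 < μ 0 ∧ Monotone μ ∧ Tendsto μ atTop atTop) ∧
      (∀ j : ℕ, ∀ v : H, ⟪φ j, v⟫ = μ j * B (φ j) v) ∧
      (∀ i j : ℕ, B (φ i) (φ j) = if i = j then 1 else 0) ∧
      (∀ i j : ℕ, i ≠ j → ⟪φ i, φ j⟫ = 0) ∧
      (μ 0 = sInf ((fun u : H => ‖u‖ ^ 2) '' {u : H | B u u = 1}) ∧
        B (φ 0) (φ 0) = 1 ∧ ‖φ 0‖ ^ 2 = μ 0) ∧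
      (∀ j : ℕ,
        μ (j + 1) = sInf ((fun u : H => ‖u‖ ^ 2) ''
          {u : H | B u u = 1 ∧ ∀ i ≤ j, B u (φ i) = 0}) ∧
        B (φ (j + 1)) (φ (j + 1)) = 1 ∧ (∀ i ≤ j, B (φ (j + 1)) (φ i) = 0) ∧
        ‖φ (j + 1)‖ ^ 2 = μ (j + 1)) := by
  set φ : ℕ → H := phiSeq hinf B hsymm hpos hweak with hφ
  have hspec := phiSeq_spec hinf B hsymm hpos hweak
  set μ : ℕ → ℝ := fun j => ‖φ j‖ ^ 2 with hμ
  have Bnorm : ∀ j, B (φ j) (φ j) = 1 := fun j => (hspec j).1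
  have Bzero : ∀ i j : ℕ, i < j → B (φ j) (φ i) = 0 :=
    fun i j h => (hspec j).2.1 ⟨i, h⟩
  have Bortho : ∀ i j : ℕ, B (φ i) (φ j) = if i = j then 1 else 0 := by
    intro i j
    rcases lt_trichotomy i j with h | rfl | h
    · rw [if_neg h.ne, hsymm]; exact Bzero i j h
    · rw [if_pos rfl]; exact Bnorm i
    · rw [if_neg h.ne']; exact Bzero j i h
  have hφne : ∀ j, φ j ≠ 0 := by
    intro j h
    have := Bnorm j
    rw [h] at this
    simp at this
  have hμpos : ∀ j, 0 < μ j := by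
    intro j
    have := norm_pos_iff.2 (hφne j)
    positivity
  have hbdd : ∀ s : Set H, BddBelow ((fun u : H => ‖u‖ ^ 2) '' s) := by
    intro s
    refine ⟨0, ?_⟩
    rintro x ⟨y, -, rfl⟩
    positivity
  -- the full eigenvalue equation
  have eig : ∀ j : ℕ, ∀ v : H, ⟪φ j, v⟫ = μ j * B (φ j) v := by
    intro j
    induction j using Nat.strong_induction_on with
    | _ j ih =>
      intro v
      set v₀ : H := v - ∑ i ∈ Finset.range j, (B v (φ i)) • φ i with hv₀
      have hXc : ∀ i : Fin j, B v₀ (φ i) = 0 := by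
        intro i
        have hterm : ∀ k ∈ Finset.range j, k ≠ (i : ℕ) →
            B v (φ k) * B (φ k) (φ i) = 0 := by
          intro k _ hk
          rw [Bortho k i, if_neg hk, mul_zero]
        simp only [hv₀, map_sub, map_sum, map_smul, ContinuousLinearMap.coe_sub',
          Pi.sub_apply, ContinuousLinearMap.coe_sum', Pi.pow_apply, Finset.sum_apply,
          ContinuousLinearMap.coe_smul', Pi.smul_apply, smul_eq_mul]
        rw [Finset.sum_eq_single_of_mem (i : ℕ) (Finset.mem_range.2 i.isLt) hterm,
          Bortho (i : ℕ) (i : ℕ), if_pos rfl, mul_one, sub_self]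
      have hEL := (hspec j).2.2.2 v₀ hXc
      have hio : ∀ i : ℕ, i < j → ⟪φ j, φ i⟫ = 0 := by
        intro i hi
        rw [real_inner_comm, ih i hi (φ j), Bortho i j, if_neg hi.ne, mul_zero]
      have hv : v = v₀ + ∑ i ∈ Finset.range j, (B v (φ i)) • φ i := by
        simp [hv₀]
      have h1 : ⟪φ j, ∑ i ∈ Finset.range j, (B v (φ i)) • φ i⟫ = 0 := by
        rw [inner_sum]
        apply Finset.sum_eq_zero
        intro i hi
        rw [real_inner_smul_right, hio i (Finset.mem_range.1 hi), mul_zero]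
      have h2 : B (φ j) (∑ i ∈ Finset.range j, (B v (φ i)) • φ i) = 0 := by
        rw [map_sum]
        apply Finset.sum_eq_zero
        intro i hi
        rw [map_smul, smul_eq_mul, Bortho j i,
          if_neg (Finset.mem_range.1 hi).ne', mul_zero]
      conv_lhs => rw [hv]
      conv_rhs => rw [hv]
      rw [inner_add_right, map_add, h1, h2, add_zero, add_zero]
      exact hEL
  -- inner-product orthogonality
  have iortho : ∀ i j : ℕ, i ≠ j → ⟪φ i, φ j⟫ = 0 := by
    intro i j hij
    rw [eig i (φ j), Bortho i j, if_neg hij, mul_zero]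
  -- monotonicity
  have hmono : Monotone μ := by
    apply monotone_nat_of_le_succ
    intro j
    have h1 : μ j = sInf ((fun u : H => ‖u‖ ^ 2) ''
        {u : H | B u u = 1 ∧ ∀ i : Fin j, B u (φ i) = 0}) := (hspec j).2.2.1
    rw [h1]
    exact csInf_le (hbdd _) ⟨φ (j + 1),
      ⟨Bnorm (j + 1), fun i => Bzero i (j + 1) (Nat.lt_succ_of_lt i.isLt)⟩, rfl⟩
  -- divergence
  have hdiv : Tendsto μ atTop atTop := by
    apply tendsto_atTop_atTop_of_monotone' hmono
    intro hBdd
    obtain ⟨C, hC⟩ := hBdd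
    have hCb : ∀ j, ‖φ j‖ ≤ Real.sqrt C := by
      intro j
      have h1 : μ j ≤ C := hC ⟨j, rfl⟩
      have := Real.sqrt_le_sqrt h1
      rwa [hμ, Real.sqrt_sq (norm_nonneg _)] at this
    set e : ℕ → H := fun j => (‖φ j‖)⁻¹ • φ j with he
    have honb : Orthonormal ℝ e := by
      refine ⟨fun j => ?_, fun i j hij => ?_⟩
      · rw [he, norm_smul, norm_inv, norm_norm,
          inv_mul_cancel₀ (norm_ne_zero_iff.2 (hφne j))]
      · simp only [he, real_inner_smul_left, real_inner_smul_right]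
        rw [iortho i j hij, mul_zero, mul_zero]
    have hw0 : ∀ w : H, Tendsto (fun j => ⟪φ j, w⟫) atTop (nhds 0) := by
      intro w
      have hsum := honb.inner_products_summable (x := w)
      have hterm : Tendsto (fun j => ‖⟪e j, w⟫‖ ^ 2) atTop (nhds 0) :=
        hsum.tendsto_atTop_zero
      have habs : Tendsto (fun j => ‖⟪e j, w⟫‖) atTop (nhds 0) := by
        have := hterm.sqrt
        simpa [Real.norm_eq_abs, Real.sqrt_sq_eq_abs] using this
      rw [tendsto_zero_iff_abs_tendsto_zero]
      apply squeeze_zero (fun j => abs_nonneg _) (g := fun j => Real.sqrt C * ‖⟪e j, w⟫‖)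
      · intro j
        have hne : ‖φ j‖ ≠ 0 := norm_ne_zero_iff.2 (hφne j)
        have hphi : ⟪φ j, w⟫ = ‖φ j‖ * ⟪e j, w⟫ := by
          rw [he]
          dsimp only
          rw [real_inner_smul_left, ← mul_assoc, mul_inv_cancel₀ hne, one_mul]
        rw [hphi, abs_mul, abs_of_nonneg (norm_nonneg (φ j))]
        exact mul_le_mul_of_nonneg_right (hCb j) (abs_nonneg _)
      · simpa using habs.const_mul (Real.sqrt C)
    have h1 := hweak φ 0 (fun w => by simpa using hw0 w)
    have h2 : (fun n => B (φ n) (φ n)) = fun _ => (1 : ℝ) := funext fun n => Bnorm n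
    rw [h2] at h1
    have h3 : (1 : ℝ) = B (0 : H) (0 : H) := tendsto_nhds_unique tendsto_const_nhds h1
    simp at h3
  refine ⟨μ, φ, ⟨hμpos 0, hmono, hdiv⟩, eig, Bortho, iortho, ⟨?_, Bnorm 0, rfl⟩, ?_⟩
  · have h1 := (hspec 0).2.2.1
    have h2 : {u : H | B u u = 1 ∧ ∀ i : Fin 0, B u (φ i) = 0}
        = {u : H | B u u = 1} := by
      ext u
      simp
    rw [← h2]
    exact h1
  · intro j
    have h2 : {u : H | B u u = 1 ∧ ∀ i : Fin (j + 1), B u (φ i) = 0}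
        = {u : H | B u u = 1 ∧ ∀ i ≤ j, B u (φ i) = 0} := by
      ext u
      simp only [Set.mem_setOf_eq, and_congr_right_iff]
      intro _
      constructor
      · intro h i hi
        exact h ⟨i, Nat.lt_succ_of_le hi⟩
      · intro h i
        exact h i (Nat.lt_succ_iff.1 i.isLt)
    refine ⟨?_, Bnorm (j + 1), fun i hi => Bzero i (j + 1) (Nat.lt_succ_of_le hi), rfl⟩
    have h1 := (hspec (j + 1)).2.2.1
    rw [← h2]
    exact h1
end

section
/- Let H be a real Hilbert space and B : H × H → ℝ a continuous symmetric bilinear form with B(u,u) > 0 for every u ≠ 0, whose quadratic form q(u) = B(u,u) is sequentially weakly continuous. Then for every μ ∈ ℝ the eigenspace E(μ) = {u ∈ H : ⟨u, v⟩ = μ B(u, v) for all v ∈ H} is a finite-dimensional linear subspace of H. -/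
open Filter Topology
open scoped RealInnerProductSpace

/-- Let `H` be a real Hilbert space and `B` a continuous
symmetric bilinear form with `B(u,u) > 0` for `u ≠ 0`, whose quadratic form
is sequentially weakly continuous. Then for every `μ ∈ ℝ` the eigenspace
`E(μ) = {u : ⟪u, v⟫ = μ B(u, v) ∀ v}` is a finite-dimensional linear
subspace of `H`. -/
theorem stmt13 {H : Type*} [NormedAddCommGroup H] [InnerProductSpace ℝ H]
    [CompleteSpace H] (B : H →L[ℝ] H →L[ℝ] ℝ)
    (hsymm : ∀ u v : H, B u v = B v u)
    (hpos : ∀ u : H, u ≠ 0 → 0 < B u u)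
    (hweak : ∀ (u : ℕ → H) (x : H),
      (∀ w : H, Tendsto (fun n => ⟪u n, w⟫) atTop (nhds ⟪x, w⟫)) →
      Tendsto (fun n => B (u n) (u n)) atTop (nhds (B x x))) :
    ∀ μ : ℝ, ∃ E : Submodule ℝ H,
      (E : Set H) = {u : H | ∀ v : H, ⟪u, v⟫ = μ * B u v} ∧
      FiniteDimensional ℝ E := by
  intro μ
  set E : Submodule ℝ H :=
    { carrier := {u : H | ∀ v : H, ⟪u, v⟫ = μ * B u v}
      add_mem' := by
        intro a b ha hb v
        simp only [inner_add_left, ha v, hb v, map_add, ContinuousLinearMap.add_apply]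
        ring
      zero_mem' := by
        intro v; simp
      smul_mem' := by
        intro c a ha v
        simp only [real_inner_smul_left, ha v, map_smul, ContinuousLinearMap.smul_apply,
          smul_eq_mul]
        ring } with hE
  refine ⟨E, rfl, ?_⟩
  -- E is closed
  have hclosed : IsClosed (E : Set H) := by
    have : (E : Set H) = ⋂ v : H, {u : H | ⟪u, v⟫ - μ * B u v = 0} := by
      ext u
      simp only [Set.mem_iInter, Set.mem_setOf_eq, sub_eq_zero]
      rfl
    rw [this]
    refine isClosed_iInter fun v => ?_
    have hc : Continuous fun u : H => ⟪u, v⟫ - μ * B u v := by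
      exact (continuous_id.inner continuous_const).sub
        (continuous_const.mul ((B.flip v).continuous))
    exact isClosed_eq hc continuous_const
  haveI : CompleteSpace E := hclosed.completeSpace_coe
  by_contra hfin
  obtain ⟨w, b, hb⟩ := exists_hilbertBasis ℝ E
  -- w is infinite
  have hwinf : w.Infinite := by
    by_contra hnw
    rw [Set.not_infinite] at hnw
    have hwfin := hnw
    haveI := hwfin.fintype
    have hsp : FiniteDimensional ℝ (Submodule.span ℝ (Set.range ⇑b)) :=
      FiniteDimensional.span_of_finite ℝ (Set.finite_range _)
    have htop : Submodule.span ℝ (Set.range ⇑b) = ⊤ := by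
      have := b.dense_span
      have hcl : IsClosed ((Submodule.span ℝ (Set.range ⇑b)) : Set E) :=
        Submodule.closed_of_finiteDimensional _
      rw [← hcl.submodule_topologicalClosure_eq]
      exact this
    rw [htop] at hsp
    exact hfin Submodule.topEquiv.finiteDimensional
  haveI : Infinite w := hwinf.to_subtype
  -- orthonormal sequence in H
  set f : ℕ → w := ⇑(Infinite.natEmbedding w)
  set e : ℕ → H := fun n => ((b (f n) : E) : H) with he
  have hbo : Orthonormal ℝ ⇑b := b.orthonormal
  have honE : Orthonormal ℝ (fun n => (b (f n) : E)) :=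
    hbo.comp f (Infinite.natEmbedding w).injective
  have hon : Orthonormal ℝ e := by
    rw [orthonormal_iff_ite] at honE ⊢
    intro i j
    have := honE i j
    rwa [Submodule.coe_inner] at this
  -- each e n lies in E
  have hmem : ∀ n, e n ∈ E := fun n => (b (f n) : E).2
  -- weak convergence to 0
  have hweak0 : ∀ v : H, Tendsto (fun n => ⟪e n, v⟫) atTop (nhds (0 : ℝ)) := by
    intro v
    have hsum : Summable fun n => ‖⟪e n, v⟫‖ ^ 2 := hon.inner_products_summable v
    have h2 : Tendsto (fun n => ‖⟪e n, v⟫‖ ^ 2) atTop (nhds 0) := hsum.tendsto_atTop_zero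
    rw [tendsto_zero_iff_norm_tendsto_zero]
    have hsq : Tendsto (fun n => Real.sqrt (‖⟪e n, v⟫‖ ^ 2)) atTop (nhds (Real.sqrt 0)) :=
      (Real.continuous_sqrt.tendsto 0).comp h2
    simpa [Real.sqrt_sq_eq_abs, abs_norm] using hsq
  have hBlim : Tendsto (fun n => B (e n) (e n)) atTop (nhds (B 0 0)) := by
    apply hweak e 0
    intro v
    simpa using hweak0 v
  have hB0 : (B 0) 0 = 0 := by simp
  -- but the quadratic form is constant 1/μ on the sequence
  have hone : ∀ n, (1 : ℝ) = μ * B (e n) (e n) := by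
    intro n
    have := hmem n (e n)
    rwa [real_inner_self_eq_norm_sq, hon.1 n, one_pow] at this
  have hμ : μ ≠ 0 := by
    intro h
    have := hone 0
    rw [h, zero_mul] at this
    exact one_ne_zero this
  have hconst : ∀ n, B (e n) (e n) = 1 / μ := by
    intro n
    field_simp
    rw [mul_comm]
    exact (hone n).symm
  have : Tendsto (fun _ : ℕ => (1 : ℝ) / μ) atTop (nhds 0) := by
    rw [hB0] at hBlim
    simpa [hconst] using hBlim
  have h1μ : (1 : ℝ) / μ = 0 := tendsto_nhds_unique tendsto_const_nhds this
  exact hμ (by simpa [div_eq_zero_iff] using h1μ)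
end

section
/- Let H be a nonzero real Hilbert space and B : H × H → ℝ a continuous symmetric bilinear form with B(u,u) > 0 for every u ≠ 0, whose quadratic form is sequentially weakly continuous, and let μ₁ := inf{‖u‖² : B(u,u) = 1}. Then: (a) μ₁ B(u,u) ≤ ‖u‖² for every u ∈ H; and (b) if u ≠ 0 and μ₁ B(u,u) = ‖u‖², then u is an eigenfunction corresponding to μ₁, i.e. ⟨u, v⟩ = μ₁ B(u, v) for all v ∈ H. -/
open Filter Topology
open scoped RealInnerProductSpace

/-- Let `H` be a nonzero real Hilbert space and `B` a
continuous symmetric bilinear form with `B(u,u) > 0` for `u ≠ 0`, whose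
quadratic form is sequentially weakly continuous, and let
`μ₁ = inf {‖u‖² : B(u,u) = 1}`. Then (a) `μ₁ B(u,u) ≤ ‖u‖²` for every `u`,
and (b) if `u ≠ 0` and `μ₁ B(u,u) = ‖u‖²` then `u` is an eigenfunction for
`μ₁`, i.e. `⟪u, v⟫ = μ₁ B(u, v)` for all `v`. -/
theorem stmt15 {H : Type*} [NormedAddCommGroup H] [InnerProductSpace ℝ H]
    [CompleteSpace H] [Nontrivial H] (B : H →L[ℝ] H →L[ℝ] ℝ)
    (hsymm : ∀ u v : H, B u v = B v u)
    (hpos : ∀ u : H, u ≠ 0 → 0 < B u u)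
    (hweak : ∀ (u : ℕ → H) (x : H),
      (∀ w : H, Tendsto (fun n => ⟪u n, w⟫) atTop (nhds ⟪x, w⟫)) →
      Tendsto (fun n => B (u n) (u n)) atTop (nhds (B x x)))
    (μ₁ : ℝ) (hμ₁ : μ₁ = sInf ((fun u : H => ‖u‖ ^ 2) '' {u : H | B u u = 1})) :
    (∀ u : H, μ₁ * B u u ≤ ‖u‖ ^ 2) ∧
    (∀ u : H, u ≠ 0 → μ₁ * B u u = ‖u‖ ^ 2 →
      ∀ v : H, ⟪u, v⟫ = μ₁ * B u v) := by
  have hBdd : BddBelow ((fun u : H => ‖u‖ ^ 2) '' {u : H | B u u = 1}) := by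
    refine ⟨0, ?_⟩
    rintro x ⟨u, -, rfl⟩
    positivity
  have ha : ∀ u : H, μ₁ * B u u ≤ ‖u‖ ^ 2 := by
    intro u
    rcases eq_or_ne u 0 with rfl | hu
    · simp
    · have hc : 0 < B u u := hpos u hu
      set c := B u u with hcdef
      have hsc : 0 < Real.sqrt c := Real.sqrt_pos.mpr hc
      set w := (Real.sqrt c)⁻¹ • u with hw
      have hBw : B w w = 1 := by
        have h1 : B w w = (Real.sqrt c)⁻¹ * ((Real.sqrt c)⁻¹ * c) := by
          simp [hw, map_smul]; exact Or.inl rfl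
        rw [h1, ← Real.mul_self_sqrt hc.le]
        field_simp
        rw [Real.sqrt_sq hsc.le]
      have hnw : ‖w‖ ^ 2 = c⁻¹ * ‖u‖ ^ 2 := by
        rw [hw, norm_smul]
        have : ‖(Real.sqrt c)⁻¹‖ = (Real.sqrt c)⁻¹ := by
          rw [Real.norm_eq_abs, abs_of_pos (by positivity)]
        rw [this, mul_pow, ← Real.sqrt_inv, Real.sq_sqrt (by positivity)]
      have hle : μ₁ ≤ ‖w‖ ^ 2 := by
        rw [hμ₁]
        exact csInf_le hBdd ⟨w, hBw, rfl⟩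
      rw [hnw] at hle
      have := mul_le_mul_of_nonneg_right hle hc.le
      calc μ₁ * c ≤ c⁻¹ * ‖u‖ ^ 2 * c := this
        _ = ‖u‖ ^ 2 := by field_simp
  refine ⟨ha, ?_⟩
  intro u hu heq v
  set a : ℝ := ‖v‖ ^ 2 - μ₁ * B v v with hadef
  set b : ℝ := 2 * (⟪u, v⟫ - μ₁ * B u v) with hbdef
  have ha0 : 0 ≤ a := by have := ha v; simp [hadef]; linarith
  have key : ∀ t : ℝ, 0 ≤ a * t ^ 2 + b * t := by
    intro t
    have h := ha (u + t • v)
    have hBexp : B (u + t • v) (u + t • v)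
        = B u u + 2 * t * B u v + t ^ 2 * B v v := by
      simp [map_add, map_smul, ContinuousLinearMap.add_apply,
        ContinuousLinearMap.smul_apply, hsymm v u, smul_eq_mul]
      ring
    have hnorm : ‖u + t • v‖ ^ 2
        = ‖u‖ ^ 2 + 2 * t * ⟪u, v⟫ + t ^ 2 * ‖v‖ ^ 2 := by
      rw [norm_add_sq_real, real_inner_smul_right, norm_smul, mul_pow]
      rw [Real.norm_eq_abs, sq_abs]
      ring
    rw [hBexp, hnorm] at h
    simp only [hadef, hbdef]
    nlinarith [h, heq]
  have hb : b = 0 := by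
    have ha1 : (0:ℝ) < a + 1 := by linarith
    set t : ℝ := -b / (a + 1) with htdef
    have ht : t * (a + 1) = -b := by
      rw [htdef]; field_simp
    have h := key t
    have h2 : t ^ 2 = 0 := by
      have hb' : b = -(t * (a + 1)) := by rw [ht]; ring
      have hbt : b * t = -(t ^ 2) - a * t ^ 2 := by rw [hb']; ring
      refine le_antisymm (by linarith [h, hbt]) (sq_nonneg t)
    have ht0 : t = 0 := by
      have := sq_eq_zero_iff.mp h2
      exact this
    rw [ht0] at ht
    linarith [ht]
  rw [hbdef] at hb
  linarith [hb]
end
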